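/- As $n \to \infty$, the ratio of GBCs of the $n$-qubit W state and GHZ state tends to 1: $\lim_{n\to\infty} \mathcal{G}(|W_n\rangle)/\mathcal{G}(|\mathrm{GHZ}_n\rangle) = 1$, with the ratio always strictly less than 1 for $n \ge 3$. -/

import Mathlib

/-- Multiplicity of the bipartitions of `n` parties whose smaller side has `m`
parties: `n.choose m` for `m < n/2`, and half of that when `n = 2m`. -/
noncomputable def kExp (n m : ℕ) : ℝ :=
  if 2 * m = n then (n.choose m : ℝ) / 2 else (n.choose m : ℝ)

/-- Total number of bipartitions of `n` parties. -/
noncomputable def cAlpha (n : ℕ) : ℝ := ∑ m ∈ Finset.Icc 1 (n / 2), kExp n m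

/-- Closed form for the GHZ-state bipartite concurrence across a bipartition
whose smaller side has `m` qubits. -/
noncomputable def ghzConc (m : ℕ) : ℝ := Real.sqrt ((2:ℝ)^m / (2 * ((2:ℝ)^m - 1)))

/-- Closed form for the W-state bipartite concurrence across a bipartition
whose smaller side has `m` qubits. -/
noncomputable def wConc (n m : ℕ) : ℝ :=
  Real.sqrt ((2:ℝ)^(m+1) * m * ((n:ℝ) - m) / (((2:ℝ)^m - 1) * (n:ℝ)^2))

/-- Product of all bipartite concurrences of the `n`-qubit GHZ state. -/
noncomputable def ghzProd (n : ℕ) : ℝ :=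
  ∏ m ∈ Finset.Icc 1 (n / 2), (ghzConc m) ^ (kExp n m)

/-- Product of all bipartite concurrences of the `n`-qubit W state. -/
noncomputable def wProd (n : ℕ) : ℝ :=
  ∏ m ∈ Finset.Icc 1 (n / 2), (wConc n m) ^ (kExp n m)

/-- The GBC of the `n`-qubit GHZ state (closed form). -/
noncomputable def ghzGBC (n : ℕ) : ℝ := (ghzProd n) ^ (1 / cAlpha n)

/-- The GBC of the `n`-qubit W state (closed form). -/
noncomputable def wGBC (n : ℕ) : ℝ := (wProd n) ^ (1 / cAlpha n)

open Finset

theorem pascal_sum (n : ℕ) (g : ℕ → ℝ) :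
    ∑ m ∈ range (n+2), ((n+1).choose m : ℝ) * g m
      = ∑ m ∈ range (n+1), (n.choose m : ℝ) * (g m + g (m+1)) := by
  rw [Finset.sum_range_succ' (fun m => ((n+1).choose m : ℝ) * g m) (n+1)]
  simp only [Nat.choose_succ_succ, Nat.cast_add, add_mul, Nat.choose_zero_right]
  rw [Finset.sum_add_distrib, Finset.sum_range_succ
    (fun i => ((n).choose (i+1) : ℝ) * g (i+1)) n]
  rw [show ((n).choose (n+1) : ℝ) = 0 by simp [Nat.choose_eq_zero_of_lt]]
  have h := Finset.sum_range_succ' (fun m => ((n).choose m : ℝ) * g m) n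
  simp only [Nat.choose_zero_right, Nat.cast_one, one_mul] at h ⊢
  simp only [mul_add]
  rw [Finset.sum_add_distrib]
  linarith [h]

theorem sum_choose_real (n : ℕ) : ∑ m ∈ range (n+1), (n.choose m : ℝ) = 2^n := by
  exact_mod_cast congrArg (Nat.cast : ℕ → ℝ) (Nat.sum_range_choose n)

theorem momA (n : ℕ) :
    ∑ m ∈ range (n+1), (n.choose m : ℝ) * ((n:ℝ) - 2*m)^2 = (n:ℝ) * 2^n := by
  induction n with
  | zero => simp
  | succ n ih =>
    have hp := pascal_sum n (fun m => (((n:ℝ)+1) - 2*m)^2)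
    have h2 : ∑ m ∈ range (n+1), (n.choose m : ℝ) *
        ((((n:ℝ)+1) - 2*m)^2 + (((n:ℝ)+1) - 2*(m+1))^2)
        = ∑ m ∈ range (n+1), ((n.choose m : ℝ) * (((n:ℝ) - 2*m)^2) * 2
          + (n.choose m : ℝ) * 2) := by
      apply Finset.sum_congr rfl; intro m _; push_cast; ring
    rw [Finset.sum_add_distrib, ← Finset.sum_mul, ih, ← Finset.sum_mul,
      sum_choose_real] at h2
    push_cast at hp ⊢
    rw [show n+1+1 = n+2 from rfl, hp, h2]
    ring

theorem momB (n : ℕ) :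
    ∑ m ∈ range (n+1), (n.choose m : ℝ) * ((n:ℝ) - 2*m)^4
      = (3*(n:ℝ)^2 - 2*(n:ℝ)) * 2^n := by
  induction n with
  | zero => simp
  | succ n ih =>
    have hp := pascal_sum n (fun m => (((n:ℝ)+1) - 2*m)^4)
    have h2 : ∑ m ∈ range (n+1), (n.choose m : ℝ) *
        ((((n:ℝ)+1) - 2*m)^4 + (((n:ℝ)+1) - 2*(m+1))^4)
        = ∑ m ∈ range (n+1), ((n.choose m : ℝ) * (((n:ℝ) - 2*m)^4) * 2
          + (n.choose m : ℝ) * (((n:ℝ) - 2*m)^2) * 12 + (n.choose m : ℝ) * 2) := by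
      apply Finset.sum_congr rfl; intro m _; push_cast; ring
    rw [Finset.sum_add_distrib, Finset.sum_add_distrib, ← Finset.sum_mul, ih,
      ← Finset.sum_mul, momA, ← Finset.sum_mul, sum_choose_real] at h2
    push_cast at hp ⊢
    rw [show n+1+1 = n+2 from rfl, hp, h2]
    ring

theorem reflect_sum (n a b : ℕ) (hb : b ≤ n + 1) (ha : 1 ≤ a) :
    ∑ m ∈ Ico a b, (n.choose m : ℝ) = ∑ m ∈ Ico (n+1-b) (n+1-a), (n.choose m : ℝ) := by
  apply Finset.sum_nbij' (fun m => n - m) (fun m => n - m)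
  · intro m hm
    simp only [Finset.mem_Ico] at hm ⊢
    omega
  · intro m hm
    simp only [Finset.mem_Ico] at hm ⊢
    omega
  · intro m hm
    simp only [Finset.mem_Ico] at hm
    omega
  · intro m hm
    simp only [Finset.mem_Ico] at hm
    omega
  · intro m hm
    simp only [Finset.mem_Ico] at hm
    rw [Nat.choose_symm (by omega)]

theorem sum_Ico_choose (n : ℕ) (hn : 1 ≤ n) :
    ∑ m ∈ Ico 1 n, (n.choose m : ℝ) = 2^n - 2 := by
  have h := sum_choose_real n
  rw [← Nat.Ico_zero_eq_range,
    Finset.sum_eq_sum_Ico_succ_bot (by omega : 0 < n + 1),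
    Finset.sum_Ico_succ_top (by omega : 1 ≤ n)] at h
  simp only [Nat.choose_zero_right, Nat.choose_self, Nat.cast_one] at h
  linarith

theorem two_cAlpha (n : ℕ) (hn : 2 ≤ n) : 2 * cAlpha n = 2^n - 2 := by
  unfold cAlpha
  rw [← Finset.Ico_add_one_right_eq_Icc]
  rcases Nat.even_or_odd n with ⟨k, hk⟩ | ⟨k, hk⟩
  · -- n = k + k
    have hk1 : 1 ≤ k := by omega
    have hd : n / 2 = k := by omega
    rw [hd, Finset.sum_Ico_succ_top (by omega : 1 ≤ k)]
    have h1 : ∑ m ∈ Ico 1 k, kExp n m = ∑ m ∈ Ico 1 k, (n.choose m : ℝ) := by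
      apply Finset.sum_congr rfl
      intro m hm
      simp only [Finset.mem_Ico] at hm
      rw [kExp, if_neg (by omega)]
    have h2 : kExp n k = (n.choose k : ℝ) / 2 := by
      rw [kExp, if_pos (by omega)]
    rw [h1, h2]
    have h3 := reflect_sum n 1 k (by omega) le_rfl
    have h4 : n + 1 - k = k + 1 := by omega
    have h5 : n + 1 - 1 = n := by omega
    rw [h4, h5] at h3
    have h6 : ∑ m ∈ Ico k (k+1), (n.choose m : ℝ) = (n.choose k : ℝ) := by
      simp
    have h7 := Finset.sum_Ico_consecutive (fun m => (n.choose m : ℝ))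
      (by omega : 1 ≤ k) (by omega : k ≤ n)
    have h8 := Finset.sum_Ico_consecutive (fun m => (n.choose m : ℝ))
      (by omega : k ≤ k+1) (by omega : k+1 ≤ n)
    have h9 := sum_Ico_choose n (by omega)
    linarith
  · -- n = 2k+1
    have hk1 : 1 ≤ k := by omega
    have hd : n / 2 = k := by omega
    rw [hd]
    have h1 : ∑ m ∈ Ico 1 (k+1), kExp n m = ∑ m ∈ Ico 1 (k+1), (n.choose m : ℝ) := by
      apply Finset.sum_congr rfl
      intro m hm
      simp only [Finset.mem_Ico] at hm
      rw [kExp, if_neg (by omega)]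
    rw [h1]
    have h3 := reflect_sum n 1 (k+1) (by omega) le_rfl
    have h4 : n + 1 - (k+1) = k + 1 := by omega
    have h5 : n + 1 - 1 = n := by omega
    rw [h4, h5] at h3
    have h7 := Finset.sum_Ico_consecutive (fun m => (n.choose m : ℝ))
      (by omega : 1 ≤ k+1) (by omega : k+1 ≤ n)
    have h9 := sum_Ico_choose n (by omega)
    linarith

theorem one_lt_two_pow (m : ℕ) (hm : 1 ≤ m) : (1:ℝ) < 2^m := by
  calc (1:ℝ) < 2^1 := by norm_num
  _ ≤ 2^m := by apply pow_le_pow_right₀ (by norm_num) hm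

theorem ghzConc_pos (m : ℕ) (hm : 1 ≤ m) : 0 < ghzConc m := by
  have h := one_lt_two_pow m hm
  apply Real.sqrt_pos.2
  have h2 : (0:ℝ) < 2 * ((2:ℝ)^m - 1) := by linarith
  exact div_pos (by positivity) h2

theorem wConc_pos (n m : ℕ) (hm : 1 ≤ m) (hmn : 2 * m ≤ n) : 0 < wConc n m := by
  have h := one_lt_two_pow m hm
  have hm' : (1:ℝ) ≤ (m:ℝ) := by exact_mod_cast hm
  have hn : (m:ℝ) < (n:ℝ) := by
    have : m < n := by omega
    exact_mod_cast this
  have hn0 : (0:ℝ) < (n:ℝ) := by linarith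
  apply Real.sqrt_pos.2
  have h4 : (0:ℝ) < (n:ℝ) - m := by linarith
  apply div_pos
  · apply mul_pos (mul_pos (by positivity) (by linarith)) h4
  · apply mul_pos (by linarith) (by positivity)

theorem conc_ratio (n m : ℕ) (hm : 1 ≤ m) (hmn : 2 * m ≤ n) :
    wConc n m / ghzConc m
      = Real.sqrt (4 * m * ((n:ℝ) - m) / (n:ℝ)^2) := by
  have h := one_lt_two_pow m hm
  have hn0 : (0:ℝ) < (n:ℝ) := by
    have : 0 < n := by omega
    exact_mod_cast this
  rw [ghzConc, wConc, ← Real.sqrt_div']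
  · congr 1
    have h1 : ((2:ℝ)^m - 1) ≠ 0 := by linarith
    have h2 : ((2:ℝ)^m) ≠ 0 := by positivity
    have h3 : ((n:ℝ))^2 ≠ 0 := by positivity
    field_simp
    ring
  · have hm' : (1:ℝ) ≤ (m:ℝ) := by exact_mod_cast hm
    have hn : (m:ℝ) < (n:ℝ) := by exact_mod_cast (by omega : m < n)
    have h2 : (0:ℝ) < 2 * ((2:ℝ)^m - 1) := by linarith
    exact le_of_lt (div_pos (by positivity) h2)

noncomputable def qval (n m : ℕ) : ℝ := Real.sqrt (4 * m * ((n:ℝ) - m) / (n:ℝ)^2)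
noncomputable def Eexp (n : ℕ) : ℝ :=
  (∑ m ∈ Icc 1 (n/2), kExp n m * Real.log (qval n m)) / cAlpha n

theorem kExp_nonneg (n m : ℕ) : 0 ≤ kExp n m := by
  unfold kExp; split <;> positivity

theorem mem_bounds {n m : ℕ} (hm : m ∈ Icc 1 (n/2)) : 1 ≤ m ∧ 2 * m ≤ n := by
  simp only [Finset.mem_Icc] at hm; omega

theorem qval_pos (n m : ℕ) (hm : 1 ≤ m) (hmn : 2 * m ≤ n) : 0 < qval n m := by
  have h := wConc_pos n m hm hmn
  have h2 := ghzConc_pos m hm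
  rw [qval, ← conc_ratio n m hm hmn]
  positivity

theorem ratio_eq (n : ℕ) (hn : 2 ≤ n) : wGBC n / ghzGBC n = Real.exp (Eexp n) := by
  have hq : ∀ m ∈ Icc 1 (n/2), 0 < qval n m := fun m hm =>
    qval_pos n m (mem_bounds hm).1 (mem_bounds hm).2
  have hgp : 0 < ghzProd n := by
    apply Finset.prod_pos
    intro m hm
    exact Real.rpow_pos_of_pos (ghzConc_pos m (mem_bounds hm).1) _
  have hwp : 0 < wProd n := by
    apply Finset.prod_pos
    intro m hm
    exact Real.rpow_pos_of_pos (wConc_pos n m (mem_bounds hm).1 (mem_bounds hm).2) _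
  have hprod : wProd n / ghzProd n = ∏ m ∈ Icc 1 (n/2), (qval n m) ^ (kExp n m) := by
    rw [wProd, ghzProd, ← Finset.prod_div_distrib]
    apply Finset.prod_congr rfl
    intro m hm
    rw [← Real.div_rpow (le_of_lt (wConc_pos n m (mem_bounds hm).1 (mem_bounds hm).2))
      (le_of_lt (ghzConc_pos m (mem_bounds hm).1)),
      conc_ratio n m (mem_bounds hm).1 (mem_bounds hm).2, qval]
  have hQ : 0 < ∏ m ∈ Icc 1 (n/2), (qval n m) ^ (kExp n m) := by
    apply Finset.prod_pos
    intro m hm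
    exact Real.rpow_pos_of_pos (hq m hm) _
  have hr : wGBC n / ghzGBC n = (∏ m ∈ Icc 1 (n/2), (qval n m) ^ (kExp n m)) ^ (1 / cAlpha n) := by
    rw [wGBC, ghzGBC, ← Real.div_rpow (le_of_lt hwp) (le_of_lt hgp), hprod]
  rw [hr, ← Real.exp_log (Real.rpow_pos_of_pos hQ _), Real.log_rpow hQ]
  congr 1
  rw [Real.log_prod (fun m hm => ne_of_gt (Real.rpow_pos_of_pos (hq m hm) _))]
  rw [Eexp, Finset.sum_congr rfl (fun m hm => Real.log_rpow (hq m hm) (kExp n m))]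
  ring

theorem pow_ge (n k : ℕ) (h : k ≤ n) : (2:ℝ)^k ≤ 2^n :=
  pow_le_pow_right₀ (by norm_num) h

theorem cAlpha_pos (n : ℕ) (hn : 2 ≤ n) : 0 < cAlpha n := by
  have h := two_cAlpha n hn
  have h2 : (4:ℝ) ≤ 2^n := by
    calc (4:ℝ) = 2^2 := by norm_num
    _ ≤ 2^n := pow_ge n 2 hn
  linarith

-- the elementary log bound
theorem log_qval_lower (n m : ℕ) (hm : 1 ≤ m) (hmn : 2 * m ≤ n) (hn : 3 ≤ n) :
    -((((n:ℝ) - 2*m)^2/(n:ℝ)^2 + ((n:ℝ) - 2*m)^4/(2*(n:ℝ)^3))/2)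
      ≤ Real.log (qval n m) := by
  set N := (n:ℝ) with hN
  have hN3 : (3:ℝ) ≤ N := by rw [hN]; exact_mod_cast hn
  have hN0 : (0:ℝ) < N := by linarith
  have hm1 : (1:ℝ) ≤ (m:ℝ) := by exact_mod_cast hm
  have hmn' : 2*(m:ℝ) ≤ N := by rw [hN]; exact_mod_cast hmn
  set d := N - 2*m with hd
  have hd0 : 0 ≤ d := by simp only [hd]; linarith
  set D := 4 * (m:ℝ) * (N - m) with hD
  have hDd : D = N^2 - d^2 := by simp only [hD, hd]; ring
  have hD2N : 2*N ≤ D := by nlinarith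
  have hD0 : 0 < D := by linarith
  have hu : qval n m = Real.sqrt (D / N^2) := by rw [qval]
  have hupos : 0 < D / N^2 := div_pos hD0 (by positivity)
  rw [hu, Real.log_sqrt (le_of_lt hupos)]
  -- log (D/N²) ≥ -(d²/N² + d⁴/(2N³))
  have hlog : 1 - (D/N^2)⁻¹ ≤ Real.log (D/N^2) := by
    have h1 := Real.log_le_sub_one_of_pos (inv_pos.2 hupos)
    rw [Real.log_inv] at h1
    linarith
  have hinv : (D/N^2)⁻¹ - 1 = d^2 / D := by
    rw [inv_div]
    field_simp
    linarith [hDd]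
  have hkey : d^2 / D ≤ d^2/N^2 + d^4/(2*N^3) := by
    rw [div_add_div _ _ (by positivity) (by positivity), div_le_div_iff₀ hD0 (by positivity), hDd]
    nlinarith [mul_nonneg (mul_nonneg (sq_nonneg N) (mul_nonneg (sq_nonneg d) (sq_nonneg d)))
      (by linarith : (0:ℝ) ≤ N^2 - d^2 - 2*N)]
  have : -(d^2/N^2 + d^4/(2*N^3)) ≤ Real.log (D/N^2) := by
    have := hlog
    rw [show (1:ℝ) - (D/N^2)⁻¹ = -((D/N^2)⁻¹ - 1) by ring, hinv] at this
    linarith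
  linarith

theorem kExp_le_choose (n m : ℕ) : kExp n m ≤ (n.choose m : ℝ) := by
  unfold kExp
  split
  · have : (0:ℝ) ≤ (n.choose m : ℝ) := by positivity
    linarith
  · exact le_rfl

theorem Eexp_lower (n : ℕ) (hn : 3 ≤ n) : -5/(n:ℝ) ≤ Eexp n := by
  have hN3 : (3:ℝ) ≤ (n:ℝ) := by exact_mod_cast hn
  have hN0 : (0:ℝ) < (n:ℝ) := by linarith
  have hNne : (n:ℝ) ≠ 0 := ne_of_gt hN0
  have hc := two_cAlpha n (by omega)
  have hcpos := cAlpha_pos n (by omega)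
  have hP : (0:ℝ) < 2^n := by positivity
  have hsub : Icc 1 (n/2) ⊆ range (n+1) := by
    intro m hm
    simp only [Finset.mem_Icc] at hm
    simp only [Finset.mem_range]
    omega
  have hS2 : ∑ m ∈ Icc 1 (n/2), kExp n m * ((n:ℝ) - 2*m)^2 ≤ (n:ℝ) * 2^n := by
    calc ∑ m ∈ Icc 1 (n/2), kExp n m * ((n:ℝ) - 2*m)^2
        ≤ ∑ m ∈ Icc 1 (n/2), (n.choose m : ℝ) * ((n:ℝ) - 2*m)^2 := by
          apply Finset.sum_le_sum
          intro m _
          exact mul_le_mul_of_nonneg_right (kExp_le_choose n m) (sq_nonneg _)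
      _ ≤ ∑ m ∈ range (n+1), (n.choose m : ℝ) * ((n:ℝ) - 2*m)^2 := by
          apply Finset.sum_le_sum_of_subset_of_nonneg hsub
          intro m _ _
          exact mul_nonneg (by positivity) (sq_nonneg _)
      _ = (n:ℝ) * 2^n := momA n
  have hS4 : ∑ m ∈ Icc 1 (n/2), kExp n m * ((n:ℝ) - 2*m)^4 ≤ 3*(n:ℝ)^2 * 2^n := by
    calc ∑ m ∈ Icc 1 (n/2), kExp n m * ((n:ℝ) - 2*m)^4
        ≤ ∑ m ∈ Icc 1 (n/2), (n.choose m : ℝ) * ((n:ℝ) - 2*m)^4 := by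
          apply Finset.sum_le_sum
          intro m _
          exact mul_le_mul_of_nonneg_right (kExp_le_choose n m) (by positivity)
      _ ≤ ∑ m ∈ range (n+1), (n.choose m : ℝ) * ((n:ℝ) - 2*m)^4 := by
          apply Finset.sum_le_sum_of_subset_of_nonneg hsub
          intro m _ _
          exact mul_nonneg (by positivity) (by positivity)
      _ = (3*(n:ℝ)^2 - 2*(n:ℝ)) * 2^n := momB n
      _ ≤ 3*(n:ℝ)^2 * 2^n := by nlinarith
  have hterm : ∀ m ∈ Icc 1 (n/2),
      kExp n m * ((n:ℝ) - 2*m)^2 * (-(1/(2*(n:ℝ)^2)))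
        + kExp n m * ((n:ℝ) - 2*m)^4 * (-(1/(4*(n:ℝ)^3)))
      ≤ kExp n m * Real.log (qval n m) := by
    intro m hm
    have h1 := log_qval_lower n m (mem_bounds hm).1 (mem_bounds hm).2 hn
    have h2 := mul_le_mul_of_nonneg_left h1 (kExp_nonneg n m)
    calc kExp n m * ((n:ℝ) - 2*m)^2 * (-(1/(2*(n:ℝ)^2)))
          + kExp n m * ((n:ℝ) - 2*m)^4 * (-(1/(4*(n:ℝ)^3)))
        = kExp n m * (-((((n:ℝ) - 2*m)^2/(n:ℝ)^2 + ((n:ℝ) - 2*m)^4/(2*(n:ℝ)^3))/2)) := by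
          field_simp
          ring
      _ ≤ kExp n m * Real.log (qval n m) := h2
  have hsum := Finset.sum_le_sum hterm
  rw [Finset.sum_add_distrib, ← Finset.sum_mul, ← Finset.sum_mul] at hsum
  have hlow : -(5/4) * 2^n / (n:ℝ)
      ≤ ∑ m ∈ Icc 1 (n/2), kExp n m * Real.log (qval n m) := by
    have e2 : ((n:ℝ) * 2^n) * (-(1/(2*(n:ℝ)^2))) + (3*(n:ℝ)^2 * 2^n) * (-(1/(4*(n:ℝ)^3)))
        = -(5/4) * 2^n / (n:ℝ) := by
      field_simp
      ring
    have l2 : ((n:ℝ) * 2^n) * (-(1/(2*(n:ℝ)^2)))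
        ≤ (∑ m ∈ Icc 1 (n/2), kExp n m * ((n:ℝ) - 2*m)^2) * (-(1/(2*(n:ℝ)^2))) := by
      apply mul_le_mul_of_nonpos_right hS2
      have : (0:ℝ) < 1/(2*(n:ℝ)^2) := by positivity
      linarith
    have l4 : (3*(n:ℝ)^2 * 2^n) * (-(1/(4*(n:ℝ)^3)))
        ≤ (∑ m ∈ Icc 1 (n/2), kExp n m * ((n:ℝ) - 2*m)^4) * (-(1/(4*(n:ℝ)^3))) := by
      apply mul_le_mul_of_nonpos_right hS4
      have : (0:ℝ) < 1/(4*(n:ℝ)^3) := by positivity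
      linarith
    linarith
  -- conclude
  have h4c : (2:ℝ)^n ≤ 4 * cAlpha n := by
    have h8 : (4:ℝ) ≤ 2^n := by
      calc (4:ℝ) = 2^2 := by norm_num
      _ ≤ 2^n := pow_ge n 2 (by omega)
    linarith
  rw [Eexp, le_div_iff₀ hcpos]
  have hstep : (-5/(n:ℝ)) * cAlpha n ≤ -(5/4) * 2^n / (n:ℝ) := by
    rw [div_mul_eq_mul_div, div_le_div_iff₀ hN0 hN0]
    nlinarith
  linarith

theorem qval_le_one (n m : ℕ) (hm : 1 ≤ m) (hmn : 2 * m ≤ n) : qval n m ≤ 1 := by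
  have hN0 : (0:ℝ) < (n:ℝ) := by
    have : 0 < n := by omega
    exact_mod_cast this
  have hm' : (0:ℝ) ≤ (m:ℝ) := by positivity
  have hmn' : 2*(m:ℝ) ≤ (n:ℝ) := by exact_mod_cast hmn
  rw [qval]
  rw [Real.sqrt_le_one, div_le_one (by positivity)]
  nlinarith [sq_nonneg ((n:ℝ) - 2*m)]

theorem Eexp_neg (n : ℕ) (hn : 3 ≤ n) : Eexp n < 0 := by
  have hcpos := cAlpha_pos n (by omega)
  have hN3 : (3:ℝ) ≤ (n:ℝ) := by exact_mod_cast hn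
  apply div_neg_of_neg_of_pos _ hcpos
  have hS : ∑ m ∈ Icc 1 (n/2), kExp n m * Real.log (qval n m)
      < ∑ m ∈ Icc 1 (n/2), (0:ℝ) := by
    apply Finset.sum_lt_sum
    · intro m hm
      have h1 := (mem_bounds hm).1
      have h2 := (mem_bounds hm).2
      apply mul_nonpos_iff.2
      left
      refine ⟨kExp_nonneg n m, ?_⟩
      exact Real.log_nonpos (le_of_lt (qval_pos n m h1 h2)) (qval_le_one n m h1 h2)
    · refine ⟨1, ?_, ?_⟩
      · simp only [Finset.mem_Icc]
        omega
      · have hk1 : kExp n 1 = (n:ℝ) := by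
          rw [kExp, if_neg (by omega)]
          simp
        apply mul_neg_of_pos_of_neg
        · rw [hk1]; linarith
        · apply Real.log_neg (qval_pos n 1 le_rfl (by omega))
          rw [qval, Real.sqrt_lt' zero_lt_one, one_pow, div_lt_one (by positivity)]
          push_cast
          nlinarith [sq_nonneg ((n:ℝ) - 2), hN3]
  simpa using hS

/-- As `n → ∞` the ratio of the GBCs of the `n`-qubit W and GHZ states tends
to `1`, while being strictly less than `1` for every `n ≥ 3`. -/
theorem wGBC_div_ghzGBC_tendsto_one :
    Filter.Tendsto (fun n : ℕ => wGBC n / ghzGBC n) Filter.atTop (nhds 1) ∧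
    ∀ n : ℕ, 3 ≤ n → wGBC n / ghzGBC n < 1 := by
  have hratio : ∀ n : ℕ, 3 ≤ n → wGBC n / ghzGBC n = Real.exp (Eexp n) :=
    fun n hn => ratio_eq n (by omega)
  constructor
  · have hE : Filter.Tendsto Eexp Filter.atTop (nhds 0) := by
      apply tendsto_of_tendsto_of_tendsto_of_le_of_le'
        (g := fun n : ℕ => (-5:ℝ)/(n:ℝ)) (h := fun _ : ℕ => (0:ℝ))
      · exact tendsto_const_div_atTop_nhds_zero_nat (-5)
      · exact tendsto_const_nhds
      · filter_upwards [Filter.eventually_ge_atTop 3] with n hn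
        have := Eexp_lower n hn
        linarith
      · filter_upwards [Filter.eventually_ge_atTop 3] with n hn
        exact le_of_lt (Eexp_neg n hn)
    have h2 : Filter.Tendsto (fun n : ℕ => Real.exp (Eexp n)) Filter.atTop (nhds 1) := by
      have h3 := (Real.continuous_exp.tendsto 0).comp hE
      rwa [Real.exp_zero] at h3
    apply h2.congr'
    filter_upwards [Filter.eventually_ge_atTop 3] with n hn
    exact (hratio n hn).symm
  · intro n hn
    rw [hratio n hn]
    calc Real.exp (Eexp n) < Real.exp 0 := Real.exp_lt_exp.2 (Eexp_neg n hn)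
      _ = 1 := Real.exp_zero
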